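/- Let (A, B, C) be a recollement of abelian categories with enough projectives, and let X_A, X_B, X_C be resolving subcategories of A, B, C respectively. Then X_B-res i_*(A) ≤ X_A-res A + X_B-res i_*(X_A), i.e., for every object M of A, the X_B-resolution dimension of i_*(M) is at most the X_A-resolution dimension of M plus the supremum of X_B-resolution dimensions of objects i_*(X) with X ∈ X_A. -/

import Mathlib

open CategoryTheory CategoryTheory.Limits

attribute [local instance] Abelian.hasFiniteBiproducts

universe v₁ v₂ v₃ u₁ u₂ u₃

/-- A recollement of abelian categories. -/
structure Recollement (A : Type u₁) (B : Type u₂) (C : Type u₃)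
    [Category.{v₁} A] [Category.{v₂} B] [Category.{v₃} C]
    [Abelian A] [Abelian B] [Abelian C] where
  /-- the functor `i^*` -/
  iStar : B ⥤ A
  /-- the functor `i_*` -/
  iLower : A ⥤ B
  /-- the functor `i^!` -/
  iShriek : B ⥤ A
  /-- the functor `j_!` -/
  jLower : C ⥤ B
  /-- the functor `j^*` -/
  jStar : B ⥤ C
  /-- the functor `j_*` -/
  jUpper : C ⥤ B
  adj₁ : iStar ⊣ iLower
  adj₂ : iLower ⊣ iShriek
  adj₃ : jLower ⊣ jStar
  adj₄ : jStar ⊣ jUpper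
  iLower_preservesFiniteLimits : PreservesFiniteLimits iLower
  iLower_preservesFiniteColimits : PreservesFiniteColimits iLower
  jStar_preservesFiniteLimits : PreservesFiniteLimits jStar
  jStar_preservesFiniteColimits : PreservesFiniteColimits jStar
  iStar_preservesFiniteColimits : PreservesFiniteColimits iStar
  iShriek_preservesFiniteLimits : PreservesFiniteLimits iShriek
  jLower_preservesFiniteColimits : PreservesFiniteColimits jLower
  jUpper_preservesFiniteLimits : PreservesFiniteLimits jUpper
  iLower_full : iLower.Full
  iLower_faithful : iLower.Faithful
  jLower_full : jLower.Full
  jLower_faithful : jLower.Faithful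
  jUpper_full : jUpper.Full
  jUpper_faithful : jUpper.Faithful
  im_eq_ker : ∀ b : B, IsZero (jStar.obj b) ↔ ∃ a : A, Nonempty (iLower.obj a ≅ b)

variable {A : Type u₁} [Category.{v₁} A] [Abelian A]

/-- A resolving subcategory: contains the projectives, closed under extensions
and under kernels of epimorphisms (given by short exact sequences). -/
structure IsResolving (X : Set A) : Prop where
  projective_mem : ∀ P : A, Projective P → P ∈ X
  ext_closed : ∀ S : ShortComplex A, S.ShortExact → S.X₁ ∈ X → S.X₃ ∈ X → S.X₂ ∈ X
  ker_epi_closed : ∀ S : ShortComplex A, S.ShortExact → S.X₂ ∈ X → S.X₃ ∈ X → S.X₁ ∈ X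

/-- `ResLE X M n` : there is an exact sequence `0 → X_n → ⋯ → X_0 → M → 0`
with all `X_i ∈ X`. -/
inductive ResLE (X : Set A) : A → ℕ → Prop
  | zero {M X₀ : A} (e : X₀ ≅ M) (hX₀ : X₀ ∈ X) : ResLE X M 0
  | succ {M K X₀ : A} {n : ℕ} (f : K ⟶ X₀) (g : X₀ ⟶ M) (w : f ≫ g = 0)
      (hse : (ShortComplex.mk f g w).ShortExact) (hX₀ : X₀ ∈ X)
      (hK : ResLE X K n) : ResLE X M (n + 1)

/-- The `X`-resolution dimension of an object `M` (`⊤` if there is no finite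
`X`-resolution). -/
noncomputable def resDim (X : Set A) (M : A) : ℕ∞ :=
  sInf {n : ℕ∞ | ∃ m : ℕ, ResLE X M m ∧ n = (m : ℕ∞)}

/-- The `X`-resolution dimension of the whole category. -/
noncomputable def resDimCat (X : Set A) : ℕ∞ :=
  ⨆ M : A, resDim X M

/-- The closure of a class of objects under finite direct sums and direct summands. -/
def addClosure (D : Set A) : Set A :=
  {a | ∃ (n : ℕ) (f : Fin n → A), (∀ i, f i ∈ D) ∧
    ∃ (s : a ⟶ ⨁ f) (r : ⨁ f ⟶ a), s ≫ r = 𝟙 a}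

namespace ResAux

open CategoryTheory.Abelian CategoryTheory.Abelian.Pseudoelement ZeroObject

attribute [local instance] CategoryTheory.Abelian.Pseudoelement.objectToSort
  CategoryTheory.Abelian.Pseudoelement.homToFun
  CategoryTheory.Abelian.Pseudoelement.overToSort

variable {D : Type u₂} [Category.{v₂} D] [Abelian D]

theorem shortExact_transport {K V M K' V' M' : D} {f : K ⟶ V} {g : V ⟶ M} {w : f ≫ g = 0}
    (h : (ShortComplex.mk f g w).ShortExact)
    (e₁ : K ≅ K') (e₂ : V ≅ V') (e₃ : M ≅ M')
    {f' : K' ⟶ V'} {g' : V' ⟶ M'} {w' : f' ≫ g' = 0}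
    (h₁ : e₁.hom ≫ f' = f ≫ e₂.hom) (h₂ : e₂.hom ≫ g' = g ≫ e₃.hom) :
    (ShortComplex.mk f' g' w').ShortExact :=
  ShortComplex.shortExact_of_iso
    (ShortComplex.isoMk e₁ e₂ e₃ h₁ h₂ : ShortComplex.mk f g w ≅ _) h

theorem exact_kernel' {V W : D} (p : V ⟶ W) :
    (ShortComplex.mk (kernel.ι p) p (kernel.condition p)).Exact :=
  ShortComplex.exact_of_f_is_kernel _ (kernelIsKernel p)

theorem shortExact_kernel {V W : D} (p : V ⟶ W) [Epi p] :
    (ShortComplex.mk (kernel.ι p) p (kernel.condition p)).ShortExact :=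
  ShortComplex.ShortExact.mk' (exact_kernel' p) inferInstance inferInstance

noncomputable def isoKernelOfShortExact {K V M : D} {f : K ⟶ V} {g : V ⟶ M} {w : f ≫ g = 0}
    (h : (ShortComplex.mk f g w).ShortExact) : K ≅ kernel g := by
  have := h.mono_f
  exact IsLimit.conePointUniqueUpToIso h.exact.fIsKernel (limit.isLimit _)

theorem projective_zero' : Projective (0 : D) := inferInstance

-- pseudoelement smoke test
example {P Q : D} (f : P ⟶ Q) [Epi f] (b : Q) : ∃ a : P, f a = b :=
  pseudo_surjective_of_epi f b



/-- Splitting of `0 → Y → X ⊞ Y → X → 0` given by `inr`, `fst`. -/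
noncomputable def splittingInrFst (X Y : D) :
    (ShortComplex.mk (biprod.inr : Y ⟶ X ⊞ Y) (biprod.fst : X ⊞ Y ⟶ X) (by simp)).Splitting where
  r := biprod.snd
  s := biprod.inl
  f_r := by simp
  s_g := by simp
  id := by rw [add_comm]; exact biprod.total

theorem exact_inl_snd' (X Y : D) :
    (ShortComplex.mk (biprod.inl : X ⟶ X ⊞ Y) (biprod.snd : X ⊞ Y ⟶ Y) (by simp)).Exact :=
  (ShortComplex.Splitting.ofHasBinaryBiproduct X Y).exact

theorem exact_inr_fst' (X Y : D) :
    (ShortComplex.mk (biprod.inr : Y ⟶ X ⊞ Y) (biprod.fst : X ⊞ Y ⟶ X) (by simp)).Exact :=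
  (splittingInrFst X Y).exact

theorem pseudo_id_apply {P : D} (a : Pseudoelement P) : pseudoApply (𝟙 P) a = a :=
  Quotient.inductionOn a fun (x : Over P) => Quotient.sound
    ⟨x.1, 𝟙 x.1, 𝟙 x.1, IsIso.epi_of_iso (𝟙 x.1), IsIso.epi_of_iso (𝟙 x.1), by simp [Abelian.app]⟩

/-- The master construction: given a short exact sequence `0 → U → V → W → 0`, an epi
`u : G ⟶ U` and a map `l : P ⟶ V` such that `l ≫ g` is epi, the map
`m = (u ≫ f, l) : G ⊞ P ⟶ V` is epi and there is a short exact sequence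
`0 → ker u → ker m → ker (l ≫ g) → 0`. -/
theorem master {U V W G P : D} {f : U ⟶ V} {g : V ⟶ W} {w : f ≫ g = 0}
    (hse : (ShortComplex.mk f g w).ShortExact)
    (u : G ⟶ U) [Epi u] (l : P ⟶ V) (p : P ⟶ W) (hp : l ≫ g = p) [Epi p] :
    ∃ (m : G ⊞ P ⟶ V) (κ₁ : kernel u ⟶ kernel m) (κ₂ : kernel m ⟶ kernel p)
      (w' : κ₁ ≫ κ₂ = 0), Epi m ∧ (ShortComplex.mk κ₁ κ₂ w').ShortExact := by
  subst hp
  have hmono := hse.mono_f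
  have hepi := hse.epi_g
  set m : G ⊞ P ⟶ V := biprod.desc (u ≫ f) l with hm
  have hinl : biprod.inl ≫ m = u ≫ f := biprod.inl_desc _ _
  have hinr : biprod.inr ≫ m = l := biprod.inr_desc _ _
  have hmg : m ≫ g = biprod.snd ≫ l ≫ g := by
    apply biprod.hom_ext' <;>
      simp only [← Category.assoc, hinl, hinr, biprod.inl_snd, biprod.inr_snd] <;>
      simp [w]
  have hEm : Epi m := by
    rw [Preadditive.epi_iff_cancel_zero]
    intro Z c hc
    have h1 : u ≫ f ≫ c = 0 := by
      have := biprod.inl ≫= hc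
      rwa [← Category.assoc, hinl, comp_zero, Category.assoc] at this
    have h2 : f ≫ c = 0 := by
      rw [← cancel_epi u, comp_zero, ← Category.assoc]
      rw [← Category.assoc] at h1; exact h1
    obtain ⟨d, hd⟩ := hse.exact.desc' c h2
    have h3 : (l ≫ g) ≫ d = 0 := by
      have := biprod.inr ≫= hc
      rw [← Category.assoc, hinr, comp_zero] at this
      rw [Category.assoc]
      rw [show g ≫ d = c from hd]; exact this
    have h4 : d = 0 := zero_of_epi_comp _ h3
    rw [← hd, h4, comp_zero]
  have hκ₁w : (kernel.ι u ≫ biprod.inl) ≫ m = 0 := by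
    rw [Category.assoc, hinl, ← Category.assoc, kernel.condition, zero_comp]
  set κ₁ : kernel u ⟶ kernel m := kernel.lift m (kernel.ι u ≫ biprod.inl) hκ₁w with hκ₁
  have hκ₂w : (kernel.ι m ≫ biprod.snd) ≫ (l ≫ g) = 0 := by
    rw [Category.assoc, ← hmg, ← Category.assoc, kernel.condition, zero_comp]
  set κ₂ : kernel m ⟶ kernel (l ≫ g) := kernel.lift (l ≫ g) (kernel.ι m ≫ biprod.snd) hκ₂w
    with hκ₂
  have hκ₁ι : κ₁ ≫ kernel.ι m = kernel.ι u ≫ biprod.inl := kernel.lift_ι _ _ _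
  have hκ₂ι : κ₂ ≫ kernel.ι (l ≫ g) = kernel.ι m ≫ biprod.snd := kernel.lift_ι _ _ _
  have w' : κ₁ ≫ κ₂ = 0 := by
    rw [← cancel_mono (kernel.ι (l ≫ g)), Category.assoc, hκ₂ι, ← Category.assoc, hκ₁ι,
      Category.assoc, biprod.inl_snd, comp_zero, zero_comp]
  refine ⟨m, κ₁, κ₂, w', hEm, ?_⟩
  have hMκ₁ : Mono κ₁ := by
    have : κ₁ ≫ kernel.ι m ≫ biprod.fst = kernel.ι u := by
      rw [← Category.assoc, hκ₁ι, Category.assoc, biprod.inl_fst, Category.comp_id]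
    exact mono_of_mono_fac this
  have hEκ₂ : Epi κ₂ := by
    apply epi_of_pseudo_surjective
    intro x
    have h1 : pseudoApply g (pseudoApply l (pseudoApply (kernel.ι (l ≫ g)) x)) = 0 := by
      rw [← Pseudoelement.comp_apply, ← Pseudoelement.comp_apply, kernel.condition]
      exact Pseudoelement.zero_apply _ _
    obtain ⟨a, ha'⟩ := pseudo_exact_of_exact hse.exact _ h1
    have ha : pseudoApply f a = pseudoApply l (pseudoApply (kernel.ι (l ≫ g)) x) := ha'
    obtain ⟨b, hb⟩ := pseudo_surjective_of_epi u a
    have key : pseudoApply m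
          (pseudoApply (biprod.inr : P ⟶ G ⊞ P) (pseudoApply (kernel.ι (l ≫ g)) x))
        = pseudoApply m (pseudoApply (biprod.inl : G ⟶ G ⊞ P) b) := by
      rw [← Pseudoelement.comp_apply biprod.inr m, hinr,
        ← Pseudoelement.comp_apply biprod.inl m, hinl,
        Pseudoelement.comp_apply u f b, hb, ha]
    obtain ⟨z, hz0, hz⟩ := sub_of_eq_image m _ _ key
    obtain ⟨k, hk'⟩ := pseudo_exact_of_exact (exact_kernel' m) z hz0
    have hk : pseudoApply (kernel.ι m) k = z := hk'
    refine ⟨k, pseudo_injective_of_mono (kernel.ι (l ≫ g)) ?_⟩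
    show pseudoApply (kernel.ι (l ≫ g)) (pseudoApply κ₂ k) = pseudoApply (kernel.ι (l ≫ g)) x
    rw [← Pseudoelement.comp_apply κ₂ (kernel.ι (l ≫ g)), hκ₂ι,
      Pseudoelement.comp_apply (kernel.ι m) biprod.snd, hk]
    have hsnd := hz _ (biprod.snd : G ⊞ P ⟶ P) (by
      rw [← Pseudoelement.comp_apply biprod.inl biprod.snd, biprod.inl_snd]
      exact Pseudoelement.zero_apply _ _)
    rw [hsnd, ← Pseudoelement.comp_apply biprod.inr biprod.snd, biprod.inr_snd,
      pseudo_id_apply]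
  refine ShortComplex.ShortExact.mk' ?_ hMκ₁ hEκ₂
  apply exact_of_pseudo_exact
  intro k hk'
  have hk : pseudoApply κ₂ k = 0 := hk'
  have h1 : pseudoApply (biprod.snd : G ⊞ P ⟶ P) (pseudoApply (kernel.ι m) k) = 0 := by
    rw [← Pseudoelement.comp_apply (kernel.ι m) biprod.snd, ← hκ₂ι,
      Pseudoelement.comp_apply κ₂ (kernel.ι (l ≫ g)), hk]
    exact Pseudoelement.apply_zero _
  obtain ⟨t, ht'⟩ := pseudo_exact_of_exact (exact_inl_snd' G P) _ h1
  have ht : pseudoApply (biprod.inl : G ⟶ G ⊞ P) t = pseudoApply (kernel.ι m) k := ht'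
  have h2 : pseudoApply f (pseudoApply u t) = 0 := by
    rw [← Pseudoelement.comp_apply u f, ← hinl, Pseudoelement.comp_apply biprod.inl m, ht,
      ← Pseudoelement.comp_apply (kernel.ι m) m, kernel.condition]
    exact Pseudoelement.zero_apply _ _
  have h3 : pseudoApply u t = 0 := zero_of_map_zero f (pseudo_injective_of_mono f) _ h2
  obtain ⟨j, hj'⟩ := pseudo_exact_of_exact (exact_kernel' u) t h3
  have hj : pseudoApply (kernel.ι u) j = t := hj'
  refine ⟨j, pseudo_injective_of_mono (kernel.ι m) ?_⟩
  show pseudoApply (kernel.ι m) (pseudoApply κ₁ j) = pseudoApply (kernel.ι m) k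
  rw [← Pseudoelement.comp_apply κ₁ (kernel.ι m), hκ₁ι,
    Pseudoelement.comp_apply (kernel.ι u) biprod.inl, hj, ht]


/-- Comparison of kernels of two maps onto the same object: if `g₀` is epi, then
`0 → ker g₀ → ker (e, g₀) → G → 0` is short exact. -/
theorem master2 {G G₀ M : D} (e : G ⟶ M) (g₀ : G₀ ⟶ M) [Epi g₀] :
    ∃ (κ : kernel g₀ ⟶ kernel (biprod.desc e g₀))
      (β : kernel (biprod.desc e g₀) ⟶ G) (w : κ ≫ β = 0),
      (ShortComplex.mk κ β w).ShortExact := by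
  set φ : G ⊞ G₀ ⟶ M := biprod.desc e g₀ with hφ
  have hinl : biprod.inl ≫ φ = e := biprod.inl_desc _ _
  have hinr : biprod.inr ≫ φ = g₀ := biprod.inr_desc _ _
  have hκw : (kernel.ι g₀ ≫ biprod.inr) ≫ φ = 0 := by
    rw [Category.assoc, hinr, kernel.condition]
  set κ : kernel g₀ ⟶ kernel φ := kernel.lift φ (kernel.ι g₀ ≫ biprod.inr) hκw with hκdef
  set β : kernel φ ⟶ G := kernel.ι φ ≫ biprod.fst with hβdef
  have hκι : κ ≫ kernel.ι φ = kernel.ι g₀ ≫ biprod.inr := kernel.lift_ι _ _ _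
  have w : κ ≫ β = 0 := by
    rw [hβdef, ← Category.assoc, hκι, Category.assoc, biprod.inr_fst, comp_zero]
  refine ⟨κ, β, w, ?_⟩
  have hMκ : Mono κ := by
    have : κ ≫ kernel.ι φ ≫ biprod.snd = kernel.ι g₀ := by
      rw [← Category.assoc, hκι, Category.assoc, biprod.inr_snd, Category.comp_id]
    exact mono_of_mono_fac this
  have hEβ : Epi β := by
    apply epi_of_pseudo_surjective
    intro x
    obtain ⟨y, hy⟩ := pseudo_surjective_of_epi g₀ (pseudoApply e x)
    have key : pseudoApply φ (pseudoApply (biprod.inl : G ⟶ G ⊞ G₀) x)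
        = pseudoApply φ (pseudoApply (biprod.inr : G₀ ⟶ G ⊞ G₀) y) := by
      rw [← Pseudoelement.comp_apply biprod.inl φ, hinl,
        ← Pseudoelement.comp_apply biprod.inr φ, hinr, hy]
    obtain ⟨z, hz0, hz⟩ := sub_of_eq_image φ _ _ key
    obtain ⟨k, hk'⟩ := pseudo_exact_of_exact (exact_kernel' φ) z hz0
    have hk : pseudoApply (kernel.ι φ) k = z := hk'
    refine ⟨k, ?_⟩
    show pseudoApply β k = x
    rw [hβdef, Pseudoelement.comp_apply (kernel.ι φ) biprod.fst, hk]
    have hfst := hz _ (biprod.fst : G ⊞ G₀ ⟶ G) (by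
      rw [← Pseudoelement.comp_apply biprod.inr biprod.fst, biprod.inr_fst]
      exact Pseudoelement.zero_apply _ _)
    rw [hfst, ← Pseudoelement.comp_apply biprod.inl biprod.fst, biprod.inl_fst,
      pseudo_id_apply]
  refine ShortComplex.ShortExact.mk' ?_ hMκ hEβ
  apply exact_of_pseudo_exact
  intro k hk'
  have hk : pseudoApply β k = 0 := hk'
  have h1 : pseudoApply (biprod.fst : G ⊞ G₀ ⟶ G) (pseudoApply (kernel.ι φ) k) = 0 := by
    rw [← Pseudoelement.comp_apply (kernel.ι φ) biprod.fst, ← hβdef, hk]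
  obtain ⟨t, ht'⟩ := pseudo_exact_of_exact (exact_inr_fst' G G₀) _ h1
  have ht : pseudoApply (biprod.inr : G₀ ⟶ G ⊞ G₀) t = pseudoApply (kernel.ι φ) k := ht'
  have h2 : pseudoApply g₀ t = 0 := by
    rw [← hinr, Pseudoelement.comp_apply biprod.inr φ, ht,
      ← Pseudoelement.comp_apply (kernel.ι φ) φ, kernel.condition]
    exact Pseudoelement.zero_apply _ _
  obtain ⟨j, hj'⟩ := pseudo_exact_of_exact (exact_kernel' g₀) t h2
  have hj : pseudoApply (kernel.ι g₀) j = t := hj'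
  refine ⟨j, pseudo_injective_of_mono (kernel.ι φ) ?_⟩
  show pseudoApply (kernel.ι φ) (pseudoApply κ j) = pseudoApply (kernel.ι φ) k
  rw [← Pseudoelement.comp_apply κ (kernel.ι φ), hκι,
    Pseudoelement.comp_apply (kernel.ι g₀) biprod.inr, hj, ht]

/-- Kernels of a composition of epimorphisms: `0 → ker e → ker (e ≫ p) → ker p → 0`. -/
theorem kerComp {G V W : D} (e : G ⟶ V) (p : V ⟶ W) [Epi e] :
    ∃ (α : kernel e ⟶ kernel (e ≫ p)) (β : kernel (e ≫ p) ⟶ kernel p) (w : α ≫ β = 0),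
      (ShortComplex.mk α β w).ShortExact := by
  have hαw : kernel.ι e ≫ e ≫ p = 0 := by rw [← Category.assoc, kernel.condition, zero_comp]
  set α : kernel e ⟶ kernel (e ≫ p) := kernel.lift (e ≫ p) (kernel.ι e) hαw with hαdef
  have hβw : (kernel.ι (e ≫ p) ≫ e) ≫ p = 0 := by rw [Category.assoc, kernel.condition]
  set β : kernel (e ≫ p) ⟶ kernel p := kernel.lift p (kernel.ι (e ≫ p) ≫ e) hβw with hβdef
  have hαι : α ≫ kernel.ι (e ≫ p) = kernel.ι e := kernel.lift_ι _ _ _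
  have hβι : β ≫ kernel.ι p = kernel.ι (e ≫ p) ≫ e := kernel.lift_ι _ _ _
  have w : α ≫ β = 0 := by
    rw [← cancel_mono (kernel.ι p), Category.assoc, hβι, ← Category.assoc, hαι,
      kernel.condition, zero_comp]
  refine ⟨α, β, w, ?_⟩
  have hMα : Mono α := by
    have : α ≫ kernel.ι (e ≫ p) = kernel.ι e := hαι
    exact mono_of_mono_fac this
  have hEβ : Epi β := by
    apply epi_of_pseudo_surjective
    intro x
    obtain ⟨t, ht⟩ := pseudo_surjective_of_epi e (pseudoApply (kernel.ι p) x)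
    have h1 : pseudoApply (e ≫ p) t = 0 := by
      rw [Pseudoelement.comp_apply e p t, ht, ← Pseudoelement.comp_apply (kernel.ι p) p,
        kernel.condition]
      exact Pseudoelement.zero_apply _ _
    obtain ⟨k, hk'⟩ := pseudo_exact_of_exact (exact_kernel' (e ≫ p)) t h1
    have hk : pseudoApply (kernel.ι (e ≫ p)) k = t := hk'
    refine ⟨k, pseudo_injective_of_mono (kernel.ι p) ?_⟩
    show pseudoApply (kernel.ι p) (pseudoApply β k) = pseudoApply (kernel.ι p) x
    rw [← Pseudoelement.comp_apply β (kernel.ι p), hβι,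
      Pseudoelement.comp_apply (kernel.ι (e ≫ p)) e, hk, ht]
  refine ShortComplex.ShortExact.mk' ?_ hMα hEβ
  apply exact_of_pseudo_exact
  intro k hk'
  have hk : pseudoApply β k = 0 := hk'
  have h1 : pseudoApply e (pseudoApply (kernel.ι (e ≫ p)) k) = 0 := by
    rw [← Pseudoelement.comp_apply (kernel.ι (e ≫ p)) e, ← hβι,
      Pseudoelement.comp_apply β (kernel.ι p), hk]
    exact Pseudoelement.apply_zero _
  obtain ⟨j, hj'⟩ := pseudo_exact_of_exact (exact_kernel' e) _ h1
  have hj : pseudoApply (kernel.ι e) j = pseudoApply (kernel.ι (e ≫ p)) k := hj'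
  refine ⟨j, pseudo_injective_of_mono (kernel.ι (e ≫ p)) ?_⟩
  show pseudoApply (kernel.ι (e ≫ p)) (pseudoApply α j) = pseudoApply (kernel.ι (e ≫ p)) k
  rw [← Pseudoelement.comp_apply α (kernel.ι (e ≫ p)), hαι, hj]


section Layer2

open ZeroObject

theorem _root_.ResLE.of_iso {X : Set D} {M M' : D} {n : ℕ} (h : ResLE X M n) (e : M ≅ M') :
    ResLE X M' n := by
  cases h with
  | zero e₀ h₀ => exact ResLE.zero (e₀ ≪≫ e) h₀
  | succ f g w hse hX₀ hK =>
    refine ResLE.succ f (g ≫ e.hom) (by rw [← Category.assoc, w, zero_comp]) ?_ hX₀ hK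
    exact shortExact_transport hse (Iso.refl _) (Iso.refl _) e (by simp) (by simp)

theorem _root_.ResLE.le_succ {X : Set D} (hX : IsResolving X) {M : D} {n : ℕ} (h : ResLE X M n) :
    ResLE X M (n + 1) := by
  induction h with
  | zero e h0 =>
    refine ResLE.succ (0 : (0 : D) ⟶ _) e.hom zero_comp ?_ h0
      (ResLE.zero (Iso.refl _) (hX.projective_mem _ inferInstance))
    exact (ShortComplex.Splitting.ofIsZeroOfIsIso _ (Limits.isZero_zero D)
      (by dsimp; infer_instance)).shortExact
  | succ f g w hse h0 hK ih => exact ResLE.succ f g w hse h0 ih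

theorem _root_.ResLE.resmono {X : Set D} (hX : IsResolving X) {M : D} {n n' : ℕ} (h : ResLE X M n)
    (hle : n ≤ n') : ResLE X M n' := by
  induction hle with
  | refl => exact h
  | step _ ih => exact ih.le_succ hX

theorem biprod_mem {X : Set D} (hX : IsResolving X) {x y : D} (hx : x ∈ X) (hy : y ∈ X) :
    (x ⊞ y) ∈ X :=
  hX.ext_closed _ (ShortComplex.Splitting.ofHasBinaryBiproduct x y).shortExact hx hy

theorem exists_epi {X : Set D} (hX : IsResolving X) {M : D} {n : ℕ} (h : ResLE X M n) :
    ∃ (G : D) (u : G ⟶ M), Epi u ∧ G ∈ X ∧ ResLE X (kernel u) (n - 1) := by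
  cases h with
  | zero e h0 =>
    refine ⟨_, e.hom, inferInstance, h0, ?_⟩
    exact ResLE.zero (kernel.ofMono e.hom).symm (hX.projective_mem _ inferInstance)
  | succ f g w hse h0 hK =>
    haveI : Epi g := hse.epi_g
    exact ⟨_, g, inferInstance, h0, hK.of_iso (isoKernelOfShortExact hse)⟩

variable [EnoughProjectives D]

/-- (H0): in a short exact sequence `0 → U → V → W → 0` with `res U ≤ p` and `res W ≤ 0`,
one has `res V ≤ p`. -/
theorem resLE_ext {X : Set D} (hX : IsResolving X) :
    ∀ (p : ℕ) {U V W : D} (f : U ⟶ V) (g : V ⟶ W) (w : f ≫ g = 0),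
      (ShortComplex.mk f g w).ShortExact → ResLE X U p → ResLE X W 0 → ResLE X V p := by
  intro p
  induction p with
  | zero =>
    intro U V W f g w hse hU hW
    cases hU with | zero eU hU0 =>
    cases hW with | zero eW hW0 =>
    refine ResLE.zero (Iso.refl V)
      (hX.ext_closed (ShortComplex.mk (eU.hom ≫ f) (g ≫ eW.inv)
        (by rw [Category.assoc, reassoc_of% w, zero_comp, comp_zero])) ?_ hU0 hW0)
    exact shortExact_transport hse eU.symm (Iso.refl V) eW.symm (by simp) (by simp)
  | succ r ih =>
    intro U V W f g w hse hU hW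
    obtain ⟨G, u, hu, hG, hker⟩ := exists_epi hX hU
    haveI := hu
    cases hW with | zero eW hW0 =>
    haveI : Epi g := hse.epi_g
    have hl : Projective.factorThru (Projective.π W) g ≫ g = Projective.π W :=
      Projective.factorThru_comp _ _
    obtain ⟨m, κ₁, κ₂, w', hm, hseκ⟩ := master hse u _ (Projective.π W) hl
    haveI := hm
    have hP : Projective.over W ∈ X := hX.projective_mem _ inferInstance
    have hkπ : kernel (Projective.π W) ∈ X := by
      refine hX.ker_epi_closed (ShortComplex.mk (kernel.ι (Projective.π W))
        (Projective.π W ≫ eW.inv)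
        (by rw [← Category.assoc, kernel.condition, zero_comp])) ?_ hP hW0
      exact shortExact_transport (shortExact_kernel (Projective.π W)) (Iso.refl _)
        (Iso.refl _) eW.symm (by simp) (by simp)
    have h3 : ResLE X (kernel m) r :=
      ih κ₁ κ₂ w' hseκ hker (ResLE.zero (Iso.refl _) hkπ)
    exact ResLE.succ (kernel.ι m) m (kernel.condition m) (shortExact_kernel m)
      (biprod_mem hX hG hP) h3

omit [EnoughProjectives D] in
/-- (C): if `0 → K → V → W → 0` is short exact with `W ∈ X` and `res V ≤ m`,
then `res K ≤ m`. -/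
theorem resLE_ker_epi {X : Set D} (hX : IsResolving X) {K V W : D} {f : K ⟶ V} {g : V ⟶ W}
    {w : f ≫ g = 0} (hse : (ShortComplex.mk f g w).ShortExact) {m : ℕ}
    (hV : ResLE X V m) (hW : W ∈ X) : ResLE X K m := by
  haveI : Epi g := hse.epi_g
  cases hV with
  | zero eV hV0 =>
    refine ResLE.zero (Iso.refl K)
      (hX.ker_epi_closed (ShortComplex.mk (f ≫ eV.inv) (eV.hom ≫ g)
        (by rw [Category.assoc, Iso.inv_hom_id_assoc, w])) ?_ hV0 hW)
    exact shortExact_transport hse (Iso.refl K) eV.symm (Iso.refl W) (by simp) (by simp)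
  | @succ _ KV G n f₂ e w₂ hse₂ hG hKV =>
    haveI : Epi e := hse₂.epi_g
    haveI : Epi (e ≫ g) := epi_comp _ _
    obtain ⟨α, β, wαβ, hseαβ⟩ := kerComp e g
    have hkq : kernel (e ≫ g) ∈ X := hX.ker_epi_closed _ (shortExact_kernel (e ≫ g)) hG hW
    have h1 : ResLE X (kernel e) n := hKV.of_iso (isoKernelOfShortExact hse₂)
    have h2 : ResLE X (kernel g) (n + 1) := ResLE.succ α β wαβ hseαβ hkq h1
    exact h2.of_iso (isoKernelOfShortExact hse).symm

/-- (S): Schanuel-type lemma: if `0 → K → G → M → 0` is short exact with `G ∈ X` and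
`res M ≤ n`, then `res K ≤ n - 1`. -/
theorem resLE_syzygy {X : Set D} (hX : IsResolving X) (n : ℕ) {K G M : D} (f : K ⟶ G)
    (e : G ⟶ M) (w : f ≫ e = 0) (hse : (ShortComplex.mk f e w).ShortExact)
    (hG : G ∈ X) (hM : ResLE X M n) : ResLE X K (n - 1) := by
  haveI : Epi e := hse.epi_g
  cases hM with
  | zero e₀ h₀ =>
    refine ResLE.zero (Iso.refl K)
      (hX.ker_epi_closed (ShortComplex.mk f (e ≫ e₀.inv)
        (by rw [← Category.assoc, w, zero_comp])) ?_ hG h₀)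
    exact shortExact_transport hse (Iso.refl K) (Iso.refl G) e₀.symm (by simp) (by simp)
  | @succ _ K₀ G₀ m f₀ g₀ w₀ hse₀ hG₀ hK₀ =>
    haveI : Epi g₀ := hse₀.epi_g
    obtain ⟨κ, β, wκβ, hseκβ⟩ := master2 e g₀
    have hresE : ResLE X (kernel (biprod.desc e g₀)) m :=
      resLE_ext hX m κ β wκβ hseκβ (hK₀.of_iso (isoKernelOfShortExact hse₀))
        (ResLE.zero (Iso.refl _) hG)
    obtain ⟨κ', β', wκβ', hseκβ'⟩ := master2 g₀ e
    have heq : (biprod.braiding G₀ G).hom ≫ biprod.desc e g₀ = biprod.desc g₀ e := by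
      apply biprod.hom_ext' <;> simp
    have hiso : kernel (biprod.desc g₀ e) ≅ kernel (biprod.desc e g₀) := by
      rw [← heq]; exact kernelIsIsoComp _ _
    have hresE' : ResLE X (kernel (biprod.desc g₀ e)) m := hresE.of_iso hiso.symm
    have hker : ResLE X (kernel e) m := resLE_ker_epi hX hseκβ' hresE' hG₀
    exact hker.of_iso (isoKernelOfShortExact hse).symm

/-- (H): horseshoe-type lemma: in a short exact sequence `0 → U → V → W → 0`,
`res V ≤ max (res U) (res W)`. -/
theorem resLE_horseshoe {X : Set D} (hX : IsResolving X) :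
    ∀ (q p : ℕ) {U V W : D} (f : U ⟶ V) (g : V ⟶ W) (w : f ≫ g = 0),
      (ShortComplex.mk f g w).ShortExact → ResLE X U p → ResLE X W q →
      ResLE X V (max p q) := by
  intro q
  induction q with
  | zero =>
    intro p U V W f g w hse hU hW
    rw [Nat.max_zero]
    exact resLE_ext hX p f g w hse hU hW
  | succ s ih =>
    intro p U V W f g w hse hU hW
    obtain ⟨G, u, hu, hG, hker⟩ := exists_epi hX hU
    haveI := hu
    haveI : Epi g := hse.epi_g
    have hl : Projective.factorThru (Projective.π W) g ≫ g = Projective.π W :=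
      Projective.factorThru_comp _ _
    obtain ⟨m, κ₁, κ₂, w', hm, hseκ⟩ := master hse u _ (Projective.π W) hl
    haveI := hm
    have hP : Projective.over W ∈ X := hX.projective_mem _ inferInstance
    have hπk : ResLE X (kernel (Projective.π W)) s :=
      resLE_syzygy hX (s + 1) (kernel.ι _) (Projective.π W) (kernel.condition _)
        (shortExact_kernel _) hP hW
    have h3 : ResLE X (kernel m) (max (p - 1) s) := ih (p - 1) κ₁ κ₂ w' hseκ hker hπk
    have h4 : ResLE X V (max (p - 1) s + 1) :=
      ResLE.succ (kernel.ι m) m (kernel.condition m) (shortExact_kernel m)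
        (biprod_mem hX hG hP) h3
    refine h4.resmono hX ?_
    have h5 : max (p - 1) s + 1 ≤ max p (s + 1) := by
      rcases Nat.le_total (p - 1) s with h | h
      · rw [Nat.max_eq_right h]; exact le_max_right p (s + 1)
      · rw [Nat.max_eq_left h]
        rcases Nat.eq_zero_or_pos p with hp | hp
        · subst hp
          exact le_trans (Nat.succ_le_succ (Nat.zero_le _)) (le_max_right 0 (s + 1))
        · calc p - 1 + 1 = p := Nat.succ_pred_eq_of_pos hp
            _ ≤ max p (s + 1) := le_max_left _ _
    exact h5

/-- (L): in a short exact sequence `0 → Y₁ → Y₂ → Y₃ → 0`,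
`res Y₃ ≤ max (res Y₁) (res Y₂) + 1`. -/
theorem resLE_quot {X : Set D} (hX : IsResolving X) {Y₁ Y₂ Y₃ : D} {f : Y₁ ⟶ Y₂} {g : Y₂ ⟶ Y₃}
    {w : f ≫ g = 0} (hse : (ShortComplex.mk f g w).ShortExact) {a b : ℕ}
    (h₁ : ResLE X Y₁ a) (h₂ : ResLE X Y₂ b) : ResLE X Y₃ (max a b + 1) := by
  haveI : Epi g := hse.epi_g
  cases h₂ with
  | zero e₂ h₂0 =>
    have w' : (f ≫ e₂.inv) ≫ (e₂.hom ≫ g) = 0 := by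
      rw [Category.assoc, Iso.inv_hom_id_assoc, w]
    have hse' : (ShortComplex.mk (f ≫ e₂.inv) (e₂.hom ≫ g) w').ShortExact :=
      shortExact_transport hse (Iso.refl _) e₂.symm (Iso.refl _) (by simp) (by simp)
    have h4 := ResLE.succ _ _ w' hse' h₂0 h₁
    exact h4.resmono hX (Nat.succ_le_succ (le_max_left _ _))
  | @succ _ K₂ Y₀ n f₂ e₂ w₂ hse₂ hY₀ hK₂ =>
    haveI : Epi e₂ := hse₂.epi_g
    haveI : Epi (e₂ ≫ g) := epi_comp _ _
    obtain ⟨α, β, wαβ, hseαβ⟩ := kerComp e₂ g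
    have hk1 : ResLE X (kernel e₂) n := hK₂.of_iso (isoKernelOfShortExact hse₂)
    have hk2 : ResLE X (kernel g) a := h₁.of_iso (isoKernelOfShortExact hse)
    have h3 : ResLE X (kernel (e₂ ≫ g)) (max n a) :=
      resLE_horseshoe hX a n α β wαβ hseαβ hk1 hk2
    have h4 : ResLE X Y₃ (max n a + 1) :=
      ResLE.succ (kernel.ι _) (e₂ ≫ g) (kernel.condition _) (shortExact_kernel _) hY₀ h3
    refine h4.resmono hX (Nat.succ_le_succ (max_le ?_ ?_))
    · exact le_trans (Nat.le_succ n) (le_max_right a (n + 1))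
    · exact le_max_left a (n + 1)

omit [EnoughProjectives D] in
theorem resDim_le_of_resLE {X : Set D} {M : D} {m : ℕ} (h : ResLE X M m) :
    resDim X M ≤ (m : ℕ∞) :=
  sInf_le ⟨m, h, rfl⟩

omit [EnoughProjectives D] in
theorem exists_resLE_of_resDim_le {X : Set D} {M : D} {k : ℕ} (h : resDim X M ≤ (k : ℕ∞)) :
    ∃ m : ℕ, m ≤ k ∧ ResLE X M m := by
  by_contra hc
  push_neg at hc
  have h2 : (k : ℕ∞) + 1 ≤ resDim X M := by
    apply le_sInf
    rintro x ⟨m, hm, rfl⟩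
    have hkm : k < m := by
      by_contra h'
      push_neg at h'
      exact hc m h' hm
    exact_mod_cast hkm
  have h3 : (k : ℕ∞) + 1 ≤ (k : ℕ∞) := h2.trans h
  exact Nat.not_succ_le_self k (by exact_mod_cast h3)

end Layer2

end ResAux

/-- `X_B`-res `i_*(A)` ≤ `X_A`-res `A` + `X_B`-res `i_*(X_A)` : for every object `M` of
`A`, the `X_B`-resolution dimension of `i_*(M)` is bounded by the `X_A`-resolution
dimension of `M` plus the supremum of `X_B`-resolution dimensions of `i_*(X)`, `X ∈ X_A`. -/
theorem resDim_iLower_le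
    (A : Type u₁) (B : Type u₂) (C : Type u₃)
    [Category.{v₁} A] [Category.{v₂} B] [Category.{v₃} C]
    [Abelian A] [Abelian B] [Abelian C]
    [EnoughProjectives A] [EnoughProjectives B] [EnoughProjectives C]
    (R : Recollement A B C)
    (X_A : Set A) (X_B : Set B) (X_C : Set C)
    (hA : IsResolving X_A) (hB : IsResolving X_B) (hC : IsResolving X_C) :
    ∀ M : A, resDim X_B (R.iLower.obj M) ≤
      resDim X_A M + ⨆ (P : A) (_ : P ∈ X_A), resDim X_B (R.iLower.obj P) := by
  haveI := R.iLower_preservesFiniteLimits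
  haveI := R.iLower_preservesFiniteColimits
  haveI : R.iLower.IsLeftAdjoint := ⟨_, ⟨R.adj₂⟩⟩
  intro M
  by_cases hT : (⨆ (P : A) (_ : P ∈ X_A), resDim X_B (R.iLower.obj P)) = ⊤
  · rw [hT, add_top]; exact le_top
  · obtain ⟨s, hs'⟩ := WithTop.ne_top_iff_exists.mp hT
    have hs : (⨆ (P : A) (_ : P ∈ X_A), resDim X_B (R.iLower.obj P)) = (s : ℕ∞) := hs'.symm
    have key : ∀ {N : A} {m : ℕ}, ResLE X_A N m →
        ∃ k : ℕ, k ≤ m + s ∧ ResLE X_B (R.iLower.obj N) k := by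
      intro N m h
      induction h with
      | @zero N' X₀ e h0 =>
        have h1 : resDim X_B (R.iLower.obj X₀) ≤ (s : ℕ∞) := by
          rw [← hs]
          exact le_biSup (fun P => resDim X_B (R.iLower.obj P)) h0
        obtain ⟨k, hk, hres⟩ := ResAux.exists_resLE_of_resDim_le h1
        exact ⟨k, by omega, hres.of_iso (R.iLower.mapIso e)⟩
      | @succ N' K X₀ n f g w hse h0 hK ih =>
        obtain ⟨k, hk, hres⟩ := ih
        have h1 : resDim X_B (R.iLower.obj X₀) ≤ (s : ℕ∞) := by
          rw [← hs]
          exact le_biSup (fun P => resDim X_B (R.iLower.obj P)) h0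
        obtain ⟨k₀, hk₀, hres₀⟩ := ResAux.exists_resLE_of_resDim_le h1
        have hmap : (ShortComplex.mk (R.iLower.map f) (R.iLower.map g)
            (by rw [← R.iLower.map_comp, w, R.iLower.map_zero])).ShortExact :=
          hse.map_of_exact R.iLower
        refine ⟨max k k₀ + 1, by omega, ?_⟩
        exact ResAux.resLE_quot hB hmap hres hres₀
    by_cases hM : resDim X_A M = ⊤
    · rw [hM, top_add]; exact le_top
    · obtain ⟨n, hn'⟩ := WithTop.ne_top_iff_exists.mp hM
      have hn : resDim X_A M = (n : ℕ∞) := hn'.symm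
      obtain ⟨m, hm, hres⟩ := ResAux.exists_resLE_of_resDim_le (le_of_eq hn)
      obtain ⟨k, hk, hkres⟩ := key hres
      calc resDim X_B (R.iLower.obj M) ≤ (k : ℕ∞) := ResAux.resDim_le_of_resLE hkres
        _ ≤ ((n + s : ℕ) : ℕ∞) := by exact_mod_cast (by omega : k ≤ n + s)
        _ = resDim X_A M + (⨆ (P : A) (_ : P ∈ X_A), resDim X_B (R.iLower.obj P)) := by
            rw [hn, hs]; push_cast; rfl
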